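/- For all integers n, m ≥ 0, every real x, and every real q with |q| < 1, one has Σ_{k=0}^n [n choose k]_q·B_{n−k}(x|q)·H_{k+m}(x|q) = 0 if n > m, and = (−1)ⁿ·q^{n(n−1)/2}·([m]_q!/[m−n]_q!)·H_{m−n}(x|q) if m ≥ n. -/

import Mathlib

noncomputable section

open Finset

/-- The q-integer `[n]_q = 1 + q + ⋯ + q^{n-1}`. -/
def qInt (q : ℝ) (n : ℕ) : ℝ := ∑ i ∈ Finset.range n, q ^ i

/-- The q-factorial `[n]_q!`. -/
def qFact (q : ℝ) (n : ℕ) : ℝ := ∏ j ∈ Finset.range n, qInt q (j + 1)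

/-- The q-binomial coefficient. -/
def qBinom (q : ℝ) (n k : ℕ) : ℝ :=
  if k ≤ n then qFact q n / (qFact q (n - k) * qFact q k) else 0

/-- The finite q-Pochhammer symbol `(a;q)_n`. -/
def qPoch (a q : ℝ) (n : ℕ) : ℝ := ∏ j ∈ Finset.range n, (1 - a * q ^ j)

/-- The infinite q-Pochhammer symbol `(a;q)_∞`. -/
def qPochInf (a q : ℝ) : ℝ := ∏' j : ℕ, (1 - a * q ^ j)

/-- The q-Hermite polynomials `H_n(x|q)`. -/
def qHermite (q : ℝ) : ℕ → ℝ → ℝ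
  | 0, _ => 1
  | 1, x => x
  | n + 2, x => x * qHermite q (n + 1) x - qInt q (n + 1) * qHermite q n x

/-- The rescaled q-ultraspherical polynomials `R_n(x|β,q)`. -/
def qUltra (q β : ℝ) : ℕ → ℝ → ℝ
  | 0, _ => 1
  | 1, x => (1 - β) * x
  | n + 2, x => (1 - β * q ^ (n + 1)) * x * qUltra q β (n + 1) x
      - (1 - β ^ 2 * q ^ n) * qInt q (n + 1) * qUltra q β n x

/-- The Al-Salam–Chihara polynomials `P_n(x|y,ρ,q)`. -/
def ASC (q y ρ : ℝ) : ℕ → ℝ → ℝ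
  | 0, _ => 1
  | 1, x => x - ρ * y
  | n + 2, x => (x - ρ * y * q ^ (n + 1)) * ASC q y ρ (n + 1) x
      - (1 - ρ ^ 2 * q ^ n) * qInt q (n + 1) * ASC q y ρ n x

/-- The polynomials `B_n(y|q)` (q⁻¹-Hermite related). -/
def qB (q : ℝ) : ℕ → ℝ → ℝ
  | 0, _ => 1
  | 1, y => -y
  | n + 2, y => -q ^ (n + 1) * y * qB q (n + 1) y + q ^ n * qInt q (n + 1) * qB q n y

/-- The big q-Hermite polynomials `H_n(x|a,q)`. -/
def bigqHermite (q a : ℝ) : ℕ → ℝ → ℝ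
  | 0, _ => 1
  | 1, x => x - a
  | n + 2, x => (x - a * q ^ (n + 1)) * bigqHermite q a (n + 1) x
      - qInt q (n + 1) * bigqHermite q a n x

/-- The probabilistic Hermite polynomials `H_n(x)`. -/
def probHermite : ℕ → ℝ → ℝ
  | 0, _ => 1
  | 1, x => x
  | n + 2, x => x * probHermite (n + 1) x - (n + 1) * probHermite n x

/-- The probabilistic Hermite polynomials on ℂ. -/
def probHermiteC : ℕ → ℂ → ℂ
  | 0, _ => 1
  | 1, x => x
  | n + 2, x => x * probHermiteC (n + 1) x - (n + 1) * probHermiteC n x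

/-- The Chebyshev polynomials of the second kind. -/
def chebU : ℕ → ℝ → ℝ
  | 0, _ => 1
  | 1, x => 2 * x
  | n + 2, x => 2 * x * chebU (n + 1) x - chebU n x

/-- The Chebyshev polynomials of the first kind. -/
def chebT : ℕ → ℝ → ℝ
  | 0, _ => 1
  | 1, x => x
  | n + 2, x => 2 * x * chebT (n + 1) x - chebT n x

/-- `W_k(x,y,t|q)`. -/
def Wk (q x y t : ℝ) (k : ℕ) : ℝ :=
  (1 - t ^ 2 * q ^ (2 * k)) ^ 2 - (1 - q) * x * y * t * q ^ k * (1 + t ^ 2 * q ^ (2 * k))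
    + (1 - q) * t ^ 2 * q ^ (2 * k) * (x ^ 2 + y ^ 2)

/-- `V_k(x,a|q)`. -/
def Vk (q x a : ℝ) (k : ℕ) : ℝ :=
  1 - (1 - q) * a * x * q ^ k + (1 - q) * a ^ 2 * q ^ (2 * k)

/-- `L_k(x,a|q)`. -/
def Lk (q x a : ℝ) (k : ℕ) : ℝ :=
  (1 + a * q ^ k) ^ 2 - (1 - q) * x ^ 2 * a ^ 2 * q ^ k

/-- The support interval `S(q) = [-2/√(1-q), 2/√(1-q)]` for `|q| < 1`. -/
def Sq (q : ℝ) : Set ℝ := Set.Icc (-(2 / Real.sqrt (1 - q))) (2 / Real.sqrt (1 - q))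

section Aux19

lemma qInt_zero (q : ℝ) : qInt q 0 = 0 := by simp [qInt]

lemma qInt_one (q : ℝ) : qInt q 1 = 1 := by simp [qInt]

lemma qInt_add (q : ℝ) (a b : ℕ) : qInt q (a + b) = qInt q a + q ^ a * qInt q b := by
  induction b with
  | zero => simp [qInt]
  | succ b ih =>
      have h1 : qInt q (a + (b + 1)) = qInt q (a + b) + q ^ (a + b) := by
        rw [show a + (b + 1) = (a + b) + 1 from rfl, qInt, Finset.sum_range_succ, ← qInt]
      have h2 : qInt q (b + 1) = qInt q b + q ^ b := by
        rw [qInt, Finset.sum_range_succ, ← qInt]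
      rw [h1, ih, h2]; ring

lemma qInt_ne_zero {q : ℝ} (hq : |q| < 1) (n : ℕ) : qInt q (n + 1) ≠ 0 := by
  have hq1 : q ≠ 1 := by
    intro h; rw [h] at hq; norm_num at hq
  have hg : qInt q (n + 1) = (q ^ (n + 1) - 1) / (q - 1) := geom_sum_eq hq1 (n + 1)
  rw [hg]
  have h1 : q ^ (n + 1) ≠ 1 := by
    have hlt : |q ^ (n + 1)| < 1 := by
      rw [abs_pow]; exact pow_lt_one₀ (abs_nonneg q) hq (by omega)
    intro h; rw [h] at hlt; norm_num at hlt
  exact div_ne_zero (sub_ne_zero.mpr h1) (sub_ne_zero.mpr hq1)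

lemma qFact_succ (q : ℝ) (n : ℕ) : qFact q (n + 1) = qFact q n * qInt q (n + 1) := by
  rw [qFact, Finset.prod_range_succ, ← qFact]

lemma qFact_zero (q : ℝ) : qFact q 0 = 1 := by simp [qFact]

lemma qFact_ne_zero {q : ℝ} (hq : |q| < 1) (n : ℕ) : qFact q n ≠ 0 := by
  rw [qFact]
  exact Finset.prod_ne_zero_iff.mpr fun j _ => qInt_ne_zero hq j

end Aux19
section Aux19b

lemma qBinom_zero {q : ℝ} (hq : |q| < 1) (n : ℕ) : qBinom q n 0 = 1 := by
  rw [qBinom, if_pos (Nat.zero_le n)]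
  simp [qFact_zero, div_self (qFact_ne_zero hq n)]

lemma qBinom_of_gt {q : ℝ} {n k : ℕ} (h : n < k) : qBinom q n k = 0 := by
  rw [qBinom, if_neg (by omega)]

lemma qBinom_succ_succ {q : ℝ} (hq : |q| < 1) (n k : ℕ) :
    qBinom q (n + 1) (k + 1) = qBinom q n k + q ^ (k + 1) * qBinom q n (k + 1) := by
  rcases lt_trichotomy k n with h | h | h
  · rw [qBinom, qBinom, qBinom, if_pos (by omega), if_pos (by omega), if_pos (by omega)]
    have e1 : n + 1 - (k + 1) = (n - (k + 1)) + 1 := by omega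
    have e2 : n - k = (n - (k + 1)) + 1 := by omega
    have hF : qFact q n ≠ 0 := qFact_ne_zero hq n
    have hG : qFact q (n - (k + 1)) ≠ 0 := qFact_ne_zero hq _
    have hK : qFact q k ≠ 0 := qFact_ne_zero hq k
    have ha : qInt q (k + 1) ≠ 0 := qInt_ne_zero hq k
    have hb : qInt q ((n - (k + 1)) + 1) ≠ 0 := qInt_ne_zero hq _
    have hc : qInt q (n + 1) = qInt q (k + 1) + q ^ (k + 1) * qInt q ((n - (k + 1)) + 1) := by
      rw [← qInt_add]
      congr 1
      omega
    rw [e1, e2, qFact_succ q n, qFact_succ q (n - (k + 1)), qFact_succ q k, hc]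
    field_simp
    try ring
  · subst h
    rw [qBinom, qBinom, if_pos le_rfl, if_pos le_rfl, qBinom_of_gt (by omega)]
    simp [qFact_zero, div_self (qFact_ne_zero hq (k + 1)), div_self (qFact_ne_zero hq k),
      Nat.sub_self]
  · rw [qBinom_of_gt (by omega), qBinom_of_gt (by omega), qBinom_of_gt (by omega)]
    ring

lemma qBinom_absorb {q : ℝ} (hq : |q| < 1) (n k : ℕ) :
    qBinom q (n + 1) k * qInt q (n + 1 - k) = qInt q (n + 1) * qBinom q n k := by
  rcases le_or_gt k n with h | h
  · rw [qBinom, qBinom, if_pos (by omega), if_pos h]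
    have e : n + 1 - k = (n - k) + 1 := by omega
    have hF : qFact q n ≠ 0 := qFact_ne_zero hq n
    have hG : qFact q (n - k) ≠ 0 := qFact_ne_zero hq _
    have hK : qFact q k ≠ 0 := qFact_ne_zero hq k
    have hb : qInt q ((n - k) + 1) ≠ 0 := qInt_ne_zero hq _
    rw [e, qFact_succ q n, qFact_succ q (n - k)]
    field_simp
    try ring
  · rcases Nat.eq_or_lt_of_le h with h' | h'
    · subst h'
      have e0 : n + 1 - n.succ = 0 := by omega
      rw [e0, qInt_zero, mul_zero, qBinom_of_gt (show n < n.succ by omega)]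
      ring
    · rw [qBinom_of_gt (by omega), qBinom_of_gt (by omega)]
      ring

end Aux19b
section Aux19c

lemma qHermite_rec (q x : ℝ) (n : ℕ) :
    qHermite q (n + 2) x = x * qHermite q (n + 1) x - qInt q (n + 1) * qHermite q n x := rfl

lemma qB_two (q x : ℝ) (n : ℕ) :
    qB q (n + 2) x = -q ^ (n + 1) * x * qB q (n + 1) x + q ^ n * qInt q (n + 1) * qB q n x := rfl

lemma qB_rec (q x : ℝ) (n j : ℕ) (hj : j ≤ n + 1) :
    qB q (n + 2 - j) x
      = -(q ^ (n + 1 - j)) * x * qB q (n + 1 - j) x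
        + q ^ (n - j) * qInt q (n + 1 - j) * qB q (n - j) x := by
  rcases Nat.lt_or_ge j (n + 1) with h | h
  · obtain ⟨a, ha⟩ : ∃ a, n - j = a := ⟨n - j, rfl⟩
    have e2 : n + 2 - j = a + 2 := by omega
    have e1 : n + 1 - j = a + 1 := by omega
    rw [e1, e2, ha, qB_two]
  · have hj' : j = n + 1 := by omega
    subst hj'
    have e2 : n + 2 - (n + 1) = 1 := by omega
    have e1 : n + 1 - (n + 1) = 0 := by omega
    have e0 : n - (n + 1) = 0 := by omega
    rw [e2, e1, e0, qInt_zero]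
    simp [qB]

/-- partial sums appearing in the theorem -/
def qS (q x : ℝ) (n m : ℕ) : ℝ :=
  ∑ k ∈ Finset.range (n + 1), qBinom q n k * qB q (n - k) x * qHermite q (k + m) x

/-- q-falling factorial `[m][m-1]⋯[m-n+1]` -/
def qA (q : ℝ) (m n : ℕ) : ℝ := ∏ j ∈ Finset.range n, qInt q (m - j)

/-- claimed value -/
def qR (q x : ℝ) (n m : ℕ) : ℝ :=
  if n ≤ m then (-1 : ℝ) ^ n * q ^ (n * (n - 1) / 2) * qA q m n * qHermite q (m - n) x else 0

lemma qA_zero (q : ℝ) (m : ℕ) : qA q m 0 = 1 := by simp [qA]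

lemma qA_succ (q : ℝ) (m n : ℕ) : qA q m (n + 1) = qA q m n * qInt q (m - n) := by
  rw [qA, Finset.prod_range_succ, ← qA]

lemma qA_peel (q : ℝ) (m n : ℕ) : qA q (m + 1) (n + 1) = qInt q (m + 1) * qA q m n := by
  rw [qA, Finset.prod_range_succ']
  have h1 : ∀ j, m + 1 - (j + 1) = m - j := fun j => by omega
  simp only [h1, Nat.sub_zero]
  rw [← qA]
  ring

lemma tri (n : ℕ) : (n + 1) * n / 2 = n + n * (n - 1) / 2 := by
  cases n with
  | zero => rfl
  | succ m =>
      have h : (m + 1 + 1) * (m + 1) = (m + 1) * m + 2 * (m + 1) := by ring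
      rw [h, Nat.add_mul_div_left _ _ (by norm_num : 0 < 2)]
      simp [Nat.add_sub_cancel]
      omega

lemma pow_tri (q : ℝ) (n : ℕ) : q ^ ((n + 1) * n / 2) = q ^ n * q ^ (n * (n - 1) / 2) := by
  rw [tri, pow_add]

end Aux19c
section Aux19d

lemma qS_zero {q : ℝ} (hq : |q| < 1) (x : ℝ) (m : ℕ) : qS q x 0 m = qR q x 0 m := by
  rw [qS, Finset.sum_range_one, qR, if_pos (Nat.zero_le m)]
  simp [qBinom_zero hq, qB, qA_zero, Nat.sub_zero]

lemma qS_one {q : ℝ} (hq : |q| < 1) (x : ℝ) (m : ℕ) : qS q x 1 m = qR q x 1 m := by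
  have h0 : qBinom q 1 0 = 1 := qBinom_zero hq 1
  have h1 : qBinom q 1 1 = 1 := by
    rw [qBinom, if_pos le_rfl, Nat.sub_self, qFact_zero]
    simp [div_self (qFact_ne_zero hq 1)]
  rw [qS, Finset.sum_range_succ, Finset.sum_range_one, h0, h1]
  simp only [Nat.sub_self, Nat.sub_zero, Nat.zero_add, Nat.one_add]
  cases m with
  | zero =>
      rw [qR, if_neg (by omega)]
      show 1 * qB q 1 x * qHermite q 0 x + 1 * qB q 0 x * qHermite q 1 x = 0
      simp [qB, qHermite]
  | succ m' =>
      rw [qR, if_pos (by omega)]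
      have e1 : m' + 1 - 1 = m' := by omega
      rw [e1]
      show 1 * qB q 1 x * qHermite q (m' + 1) x + 1 * qB q 0 x * qHermite q (m' + 2) x = _
      rw [qHermite_rec]
      have hA : qA q (m' + 1) 1 = qInt q (m' + 1) := by
        rw [qA, Finset.prod_range_one, Nat.sub_zero]
      rw [hA]
      show 1 * -x * qHermite q (m' + 1) x + 1 * 1 *
        (x * qHermite q (m' + 1) x - qInt q (m' + 1) * qHermite q m' x) = _
      ring

end Aux19d
section Aux19e

lemma qS_rec {q : ℝ} (hq : |q| < 1) (x : ℝ) (n m : ℕ) :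
    qS q x (n + 2) m = qS q x (n + 1) (m + 1) - q ^ (n + 1) * x * qS q x (n + 1) m
      + q ^ n * qInt q (n + 1) * qS q x n m := by
  have hT1 : ∑ j ∈ Finset.range (n + 2),
      qBinom q (n + 1) j * qB q (n + 1 - j) x * qHermite q (j + m) x = qS q x (n + 1) m := by
    rw [qS]
  have hT1' : ∑ j ∈ Finset.range (n + 2),
      qBinom q (n + 1) j * qB q (n + 1 - j) x * qHermite q (j + (m + 1)) x
        = qS q x (n + 1) (m + 1) := by
    rw [qS]
  have hT2 : ∑ j ∈ Finset.range (n + 2),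
      qBinom q n j * qB q (n - j) x * qHermite q (j + m) x = qS q x n m := by
    rw [show n + 2 = (n + 1) + 1 from rfl, Finset.sum_range_succ,
      qBinom_of_gt (show n < n + 1 by omega), qS]
    simp
  -- step 1 : split off Pascal
  have step1 : qS q x (n + 2) m
      = qS q x (n + 1) (m + 1)
        + ∑ j ∈ Finset.range (n + 3), q ^ j * qBinom q (n + 1) j * qB q (n + 2 - j) x *
            qHermite q (j + m) x := by
    rw [qS, show n + 2 + 1 = (n + 2) + 1 from rfl, Finset.sum_range_succ']
    have hsplit : ∀ k ∈ Finset.range (n + 2),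
        qBinom q (n + 2) (k + 1) * qB q (n + 2 - (k + 1)) x * qHermite q (k + 1 + m) x
          = (qBinom q (n + 1) k * qB q (n + 1 - k) x * qHermite q (k + (m + 1)) x)
            + (q ^ (k + 1) * qBinom q (n + 1) (k + 1) * qB q (n + 2 - (k + 1)) x *
                qHermite q (k + 1 + m) x) := by
      intro k hk
      rw [qBinom_succ_succ hq]
      have e1 : n + 2 - (k + 1) = n + 1 - k := by omega
      have e2 : k + 1 + m = k + (m + 1) := by omega
      rw [e1, e2]
      ring
    rw [Finset.sum_congr rfl hsplit, Finset.sum_add_distrib]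
    have hT : ∑ j ∈ Finset.range (n + 3), q ^ j * qBinom q (n + 1) j * qB q (n + 2 - j) x *
          qHermite q (j + m) x
        = (∑ k ∈ Finset.range (n + 2), q ^ (k + 1) * qBinom q (n + 1) (k + 1) *
            qB q (n + 2 - (k + 1)) x * qHermite q (k + 1 + m) x)
          + q ^ 0 * qBinom q (n + 1) 0 * qB q (n + 2 - 0) x * qHermite q (0 + m) x := by
      rw [show n + 3 = (n + 2) + 1 from rfl, Finset.sum_range_succ']
    rw [hT, hT1', qBinom_zero hq, qBinom_zero hq]
    ring
  -- step 2 : expand the B recurrence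
  have step2 : ∑ j ∈ Finset.range (n + 3), q ^ j * qBinom q (n + 1) j * qB q (n + 2 - j) x *
        qHermite q (j + m) x
      = -(q ^ (n + 1)) * x * qS q x (n + 1) m + q ^ n * qInt q (n + 1) * qS q x n m := by
    rw [show n + 3 = (n + 2) + 1 from rfl, Finset.sum_range_succ,
      qBinom_of_gt (show n + 1 < n + 2 by omega)]
    have hterm : ∀ j ∈ Finset.range (n + 2),
        q ^ j * qBinom q (n + 1) j * qB q (n + 2 - j) x * qHermite q (j + m) x
          = -(q ^ (n + 1)) * x *
              (qBinom q (n + 1) j * qB q (n + 1 - j) x * qHermite q (j + m) x)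
            + q ^ n * qInt q (n + 1) *
              (qBinom q n j * qB q (n - j) x * qHermite q (j + m) x) := by
      intro j hj
      rw [Finset.mem_range] at hj
      rw [qB_rec q x n j (by omega)]
      have habs := qBinom_absorb hq n j
      rcases Nat.lt_or_ge j (n + 1) with h | h
      · have hp1 : q ^ j * q ^ (n + 1 - j) = q ^ (n + 1) := by
          rw [← pow_add]; congr 1; omega
        have hp2 : q ^ j * q ^ (n - j) = q ^ n := by
          rw [← pow_add]; congr 1; omega
        have expand : q ^ j * qBinom q (n + 1) j *
            (-(q ^ (n + 1 - j)) * x * qB q (n + 1 - j) x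
              + q ^ (n - j) * qInt q (n + 1 - j) * qB q (n - j) x) * qHermite q (j + m) x
          = -(q ^ j * q ^ (n + 1 - j)) * x *
              (qBinom q (n + 1) j * qB q (n + 1 - j) x * qHermite q (j + m) x)
            + (q ^ j * q ^ (n - j)) * (qBinom q (n + 1) j * qInt q (n + 1 - j)) *
              (qB q (n - j) x * qHermite q (j + m) x) := by ring
        rw [expand, hp1, hp2, habs]
        ring
      · have hj' : j = n + 1 := by omega
        subst hj'
        have e0 : n + 1 - (n + 1) = 0 := by omega
        have e0' : n - (n + 1) = 0 := by omega
        rw [e0, e0', qInt_zero, qBinom_of_gt (show n < n + 1 by omega)]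
        ring
    rw [Finset.sum_congr rfl hterm, Finset.sum_add_distrib, ← Finset.mul_sum, ← Finset.mul_sum,
      hT1, hT2]
    ring
  rw [step1, step2]
  ring

end Aux19e
section Aux19f

lemma qR_rec (q x : ℝ) (n m : ℕ) :
    qR q x (n + 2) m = qR q x (n + 1) (m + 1) - q ^ (n + 1) * x * qR q x (n + 1) m
      + q ^ n * qInt q (n + 1) * qR q x n m := by
  rcases Nat.lt_or_ge m n with h | h
  · rw [qR, qR, qR, qR, if_neg (by omega), if_neg (by omega), if_neg (by omega),
      if_neg (by omega)]
    ring
  rcases Nat.eq_or_lt_of_le h with h0 | h'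
  · subst h0
    rw [qR, qR, qR, qR, if_neg (by omega), if_pos (by omega), if_neg (by omega),
      if_pos (by omega)]
    have e1 : n + 1 - (n + 1) = 0 := by omega
    have e2 : n - n = 0 := by omega
    have e3 : n + 1 - 1 = n := by omega
    rw [e1, e2, e3, qA_peel, pow_tri]
    show (0:ℝ) = (-1)^(n+1) * (q ^ n * q ^ (n * (n-1)/2)) * (qInt q (n+1) * qA q n n) * 1
      - q^(n+1)*x*0 + q^n * qInt q (n+1) * ((-1)^n * q^(n*(n-1)/2) * qA q n n * 1)
    ring
  rcases Nat.eq_or_lt_of_le h' with h1 | h2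
  · have h1' : m = n + 1 := h1.symm
    subst h1'
    rw [qR, qR, qR, qR, if_neg (by omega), if_pos (by omega), if_pos (by omega),
      if_pos (by omega)]
    have eA : n + 1 + 1 - (n + 1) = 1 := by omega
    have eB : n + 1 - (n + 1) = 0 := by omega
    have eC : n + 1 - n = 1 := by omega
    have e3 : n + 1 - 1 = n := by omega
    rw [eA, eB, eC, e3]
    have hH1 : qHermite q 1 x = x := rfl
    have hH0 : qHermite q 0 x = 1 := rfl
    have hInt : qInt q (n + 1 + 1) = qInt q (n + 1) + q ^ (n + 1) := by
      rw [qInt_add q (n + 1) 1, qInt_one, mul_one]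
    rw [qA_peel, qA_succ, eC, qInt_one, hH1, hH0, hInt, pow_tri]
    ring
  · obtain ⟨d, rfl⟩ : ∃ d, m = n + 2 + d := ⟨m - (n + 2), by omega⟩
    rw [qR, qR, qR, qR, if_pos (by omega), if_pos (by omega), if_pos (by omega),
      if_pos (by omega)]
    have eA : n + 2 + d - (n + 2) = d := by omega
    have eB : n + 2 + d - (n + 1) = d + 1 := by omega
    have eC : n + 2 + d + 1 - (n + 1) = d + 2 := by omega
    have eD : n + 2 + d - n = d + 2 := by omega
    have e3 : n + 1 - 1 = n := by omega
    have e4 : n + 2 - 1 = n + 1 := by omega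
    rw [eA, eB, eC, eD, e3, e4]
    have hA2 : qA q (n + 2 + d) (n + 2) = qA q (n + 2 + d) n * qInt q (d + 2) * qInt q (d + 1) := by
      rw [show n + 2 = (n + 1) + 1 from rfl, qA_succ, qA_succ, eB, eD]
    have hA1 : qA q (n + 2 + d) (n + 1) = qA q (n + 2 + d) n * qInt q (d + 2) := by
      rw [qA_succ, eD]
    have hA0 : qA q (n + 2 + d + 1) (n + 1) = qInt q (n + 2 + d + 1) * qA q (n + 2 + d) n :=
      qA_peel q (n + 2 + d) n
    have hInt : qInt q (n + 2 + d + 1) = qInt q (n + 1) + q ^ (n + 1) * qInt q (d + 2) := by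
      rw [← qInt_add]
      congr 1
      omega
    have hp2 : q ^ ((n + 2) * (n + 1) / 2) = q ^ (n + 1) * q ^ ((n + 1) * n / 2) := by
      have := pow_tri q (n + 1)
      rwa [e3] at this
    rw [hA2, hA1, hA0, hInt, qHermite_rec, hp2, pow_tri]
    ring

end Aux19f
section Aux19g

lemma qS_eq_qR {q : ℝ} (hq : |q| < 1) (x : ℝ) : ∀ n m : ℕ, qS q x n m = qR q x n m := by
  intro n
  induction n using Nat.strong_induction_on with
  | _ n ih =>
    match n, ih with
    | 0, _ => exact fun m => qS_zero hq x m
    | 1, _ => exact fun m => qS_one hq x m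
    | (k + 2), ih =>
      intro m
      rw [qS_rec hq x k m, ih (k + 1) (by omega) (m + 1), ih (k + 1) (by omega) m,
        ih k (by omega) m, qR_rec]

lemma qA_mul {q : ℝ} (n m : ℕ) (h : n ≤ m) : qA q m n * qFact q (m - n) = qFact q m := by
  induction n with
  | zero => rw [qA_zero, Nat.sub_zero, one_mul]
  | succ n ih =>
      have h' : n ≤ m := by omega
      have e : m - n = (m - (n + 1)) + 1 := by omega
      rw [qA_succ, e, mul_assoc, mul_comm (qInt q ((m - (n+1)) + 1)), ← qFact_succ, ← e]
      exact ih h'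

lemma qA_eq {q : ℝ} (hq : |q| < 1) (n m : ℕ) (h : n ≤ m) :
    qA q m n = qFact q m / qFact q (m - n) := by
  rw [eq_div_iff (qFact_ne_zero hq (m - n))]
  exact qA_mul n m h

end Aux19g


/-- `Σ_{k=0}^n [n choose k]_q·B_{n-k}(x|q)·H_{k+m}(x|q)` vanishes for `n > m`
and equals `(-1)ⁿ·q^{n(n-1)/2}·([m]_q!/[m-n]_q!)·H_{m-n}(x|q)` for `m ≥ n`. -/
theorem sum_qB_qHermite (n m : ℕ) (x q : ℝ) (hq : |q| < 1) :
    (n > m →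
      ∑ k ∈ Finset.range (n + 1), qBinom q n k * qB q (n - k) x * qHermite q (k + m) x = 0) ∧
    (n ≤ m →
      ∑ k ∈ Finset.range (n + 1), qBinom q n k * qB q (n - k) x * qHermite q (k + m) x =
        (-1 : ℝ) ^ n * q ^ (n * (n - 1) / 2) * (qFact q m / qFact q (m - n)) *
          qHermite q (m - n) x) := by
  have key := qS_eq_qR hq x n m
  rw [qS] at key
  constructor
  · intro h
    rw [key, qR, if_neg (by omega)]
  · intro h
    rw [key, qR, if_pos h, qA_eq hq n m h]
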